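/- arXiv:1112.3401 — 3 statements merged into one kernel-verified Lean document; each statement's English description precedes it below -/
import Mathlib

section
/- For γ ∈ (0, α), there exists a constant c = c(α,γ) > 0 such that for all t > 0 and all r ≥ 0, ∫_0^{t/2} min(1, r/s^{1/α})^γ ds ≤ c ∫_{t/2}^{t} min(1, r/s^{1/α})^γ ds. -/
open Real MeasureTheory

private lemma meas_aux (α γ r : ℝ) (hα : 0 < α) (hγ : 0 ≤ γ) :
    Measurable fun s : ℝ => (min 1 (r / s ^ (1 / α))) ^ γ := by
  have h1 : Measurable fun s : ℝ => s ^ (1 / α) :=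
    (Real.continuous_rpow_const (by positivity)).measurable
  exact ((Real.continuous_rpow_const hγ).measurable).comp
    (measurable_const.min (measurable_const.div h1))

private lemma bdd_int (α γ r a b : ℝ) (hα : 0 < α) (ha : 0 ≤ a) (hγ : 0 ≤ γ) (hr : 0 ≤ r) :
    IntegrableOn (fun s : ℝ => (min 1 (r / s ^ (1 / α))) ^ γ) (Set.Ioo a b) := by
  apply Measure.integrableOn_of_bounded (M := 1) (by simp)
    (meas_aux α γ r hα hγ).aestronglyMeasurable
  filter_upwards [ae_restrict_mem measurableSet_Ioo] with s hs
  have hs0 : 0 < s := lt_of_le_of_lt ha hs.1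
  have h1 : 0 ≤ r / s ^ (1 / α) := div_nonneg hr (rpow_nonneg hs0.le _)
  have h2 : 0 ≤ min 1 (r / s ^ (1 / α)) := le_min one_pos.le h1
  rw [Real.norm_eq_abs, abs_of_nonneg (rpow_nonneg h2 _)]
  exact Real.rpow_le_one h2 (min_le_left _ _) hγ

theorem stmt6 (α γ : ℝ) (hα : 0 < α) (hα2 : α < 2) (hγ : 0 < γ) (hγα : γ < α) :
    ∃ c : ℝ, 0 < c ∧ ∀ t r : ℝ, 0 < t → 0 ≤ r →
      (∫ s in Set.Ioo (0 : ℝ) (t / 2), (min 1 (r / s ^ (1 / α))) ^ γ)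
        ≤ c * ∫ s in Set.Ioo (t / 2) t, (min 1 (r / s ^ (1 / α))) ^ γ := by
  set β : ℝ := γ / α with hβdef
  have hβ0 : 0 < β := div_pos hγ hα
  have hβ1 : β < 1 := (div_lt_one hα).mpr hγα
  refine ⟨2 ^ β / (1 - β), div_pos (rpow_pos_of_pos two_pos β) (by linarith), ?_⟩
  intro t r ht hr
  set T : ℝ := t / 2 with hTdef
  have hT0 : 0 < T := by positivity
  have ht2T : t = 2 * T := by rw [hTdef]; ring
  set M : ℝ := (min 1 (r / t ^ (1 / α))) ^ γ with hM
  have hM0 : 0 ≤ M :=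
    rpow_nonneg (le_min one_pos.le (div_nonneg hr (rpow_nonneg ht.le _))) γ
  -- lower bound for RHS integral
  have hA : T * M ≤ ∫ s in Set.Ioo T t, (min 1 (r / s ^ (1 / α))) ^ γ := by
    have hmono : ∀ s ∈ Set.Ioo T t, M ≤ (min 1 (r / s ^ (1 / α))) ^ γ := by
      intro s hs
      have hs0 : 0 < s := hT0.trans hs.1
      have h1 : s ^ (1 / α) ≤ t ^ (1 / α) :=
        rpow_le_rpow hs0.le hs.2.le (by positivity)
      have h2 : r / t ^ (1 / α) ≤ r / s ^ (1 / α) :=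
        div_le_div_of_nonneg_left hr (rpow_pos_of_pos hs0 _) h1
      exact rpow_le_rpow (le_min one_pos.le (div_nonneg hr (rpow_nonneg ht.le _)))
        (min_le_min le_rfl h2) hγ.le
    have := setIntegral_mono_on (integrableOn_const (by simp))
      (bdd_int α γ r T t hα hT0.le hγ.le hr) measurableSet_Ioo hmono
    rw [setIntegral_const, Real.volume_real_Ioo_of_le (by linarith)] at this
    calc T * M = (t - T) • M := by rw [smul_eq_mul]; rw [ht2T]; ring_nf
    _ ≤ _ := this
  -- upper bound for LHS integral
  have hB : (∫ s in Set.Ioo (0 : ℝ) T, (min 1 (r / s ^ (1 / α))) ^ γ)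
      ≤ ∫ s in Set.Ioo (0 : ℝ) T, M * t ^ β * s ^ (-β) := by
    have hint : IntegrableOn (fun s : ℝ => M * t ^ β * s ^ (-β)) (Set.Ioo 0 T) := by
      have : IntervalIntegrable (fun s : ℝ => s ^ (-β)) volume 0 T :=
        intervalIntegral.intervalIntegrable_rpow' (by linarith)
      have h2 := (intervalIntegrable_iff_integrableOn_Ioo_of_le hT0.le).mp this
      exact h2.const_mul (M * t ^ β)
    refine setIntegral_mono_on (bdd_int α γ r 0 T hα le_rfl hγ.le hr) hint measurableSet_Ioo ?_
    intro s hs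
    have hs0 : 0 < s := hs.1
    have hst : 0 < t / s := by positivity
    set k : ℝ := (t / s) ^ (1 / α) with hk
    have hk1 : 1 ≤ k := by
      apply Real.one_le_rpow _ (by positivity)
      rw [le_div_iff₀ hs0]
      have := hs.2
      rw [hTdef] at this; nlinarith
    have hk0 : 0 < k := lt_of_lt_of_le one_pos hk1
    have ha0 : 0 ≤ r / t ^ (1 / α) := div_nonneg hr (rpow_nonneg ht.le _)
    have key : r / s ^ (1 / α) = k * (r / t ^ (1 / α)) := by
      have hts : t ^ (1 / α) = k * s ^ (1 / α) := by
        rw [hk, ← Real.mul_rpow hst.le hs0.le, div_mul_cancel₀ _ hs0.ne']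
      rw [hts]
      field_simp
    have hmin : min 1 (r / s ^ (1 / α)) ≤ k * min 1 (r / t ^ (1 / α)) := by
      rw [key]
      calc min 1 (k * (r / t ^ (1 / α))) ≤ min k (k * (r / t ^ (1 / α))) :=
            min_le_min hk1 le_rfl
      _ = k * min 1 (r / t ^ (1 / α)) := by
            rw [mul_min_of_nonneg _ _ hk0.le, mul_one]
    have hnn : 0 ≤ min 1 (r / s ^ (1 / α)) := by
      rw [key]; exact le_min one_pos.le (mul_nonneg hk0.le ha0)
    calc (min 1 (r / s ^ (1 / α))) ^ γ ≤ (k * min 1 (r / t ^ (1 / α))) ^ γ :=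
          rpow_le_rpow hnn hmin hγ.le
    _ = k ^ γ * M := by
          rw [Real.mul_rpow hk0.le (le_min one_pos.le ha0)]
    _ = M * t ^ β * s ^ (-β) := by
          rw [hk, ← Real.rpow_mul hst.le, one_div_mul_eq_div,
            Real.div_rpow ht.le hs0.le, Real.rpow_neg hs0.le]
          ring
  have hC : (∫ s in Set.Ioo (0 : ℝ) T, M * t ^ β * s ^ (-β))
      = 2 ^ β / (1 - β) * (T * M) := by
    rw [MeasureTheory.integral_const_mul]
    have h1 : (∫ s in Set.Ioo (0 : ℝ) T, s ^ (-β)) = T ^ (1 - β) / (1 - β) := by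
      rw [← integral_Ioc_eq_integral_Ioo, ← intervalIntegral.integral_of_le hT0.le,
        integral_rpow (Or.inl (by linarith : (-1 : ℝ) < -β)),
        Real.zero_rpow (by linarith : -β + 1 ≠ 0),
        show -β + 1 = 1 - β by ring, sub_zero]
    rw [h1, ht2T, Real.mul_rpow two_pos.le hT0.le]
    have hTT : T ^ β * T ^ (1 - β) = T := by
      rw [← Real.rpow_add hT0, show β + (1 - β) = 1 by ring, Real.rpow_one]
    have h2 : (1 : ℝ) - β ≠ 0 := by linarith
    field_simp
    linear_combination M * hTT
  calc (∫ s in Set.Ioo (0 : ℝ) (t / 2), (min 1 (r / s ^ (1 / α))) ^ γ)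
      ≤ 2 ^ β / (1 - β) * (T * M) := by rw [← hC]; exact hB
  _ ≤ 2 ^ β / (1 - β) * ∫ s in Set.Ioo (t / 2) t, (min 1 (r / s ^ (1 / α))) ^ γ := by
      apply mul_le_mul_of_nonneg_left _ (div_nonneg (by positivity) (by linarith))
      exact hA
end

section
/- Let d ≥ 1, α ∈ (0,2), γ ∈ [0, min(α,d)). There exists C = C(d,α,γ) > 0 such that for every t > 0 and y ∈ ℝ^d, ∫_0^t ∫_{ℝ^d} q(s,y,w) · (1 + t^{1/α}/|y-w|)^γ dw ds ≤ C·t, where q(s,y,w) = min(s^{-d/α}, s/|y-w|^{d+α}). -/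
open Real MeasureTheory Set Metric
open scoped ENNReal

theorem ball_int (d : ℕ) (β : ℝ) (h0 : 0 < β) (hβ : β < d) :
    IntegrableOn (fun x : EuclideanSpace ℝ (Fin d) => ‖x‖ ^ (-β)) (ball 0 1) volume := by
  set E := EuclideanSpace ℝ (Fin d)
  set μ : Measure E := volume.restrict (ball 0 1) with hμ
  have hmeas : Measurable (fun x : E => ‖x‖ ^ (-β)) := by fun_prop
  constructor
  · exact hmeas.aestronglyMeasurable
  · have hnn : ∀ x : E, 0 ≤ ‖x‖ ^ (-β) := fun x => rpow_nonneg (norm_nonneg _) _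
    have heq : (∫⁻ a : E, ‖‖a‖ ^ (-β)‖ₑ ∂μ) = ∫⁻ a : E, ENNReal.ofReal (‖a‖ ^ (-β)) ∂μ :=
      lintegral_enorm_of_nonneg fun x => hnn x
    rw [HasFiniteIntegral, ← hμ, heq]
    rw [lintegral_eq_lintegral_meas_le μ (ae_of_all _ hnn) hmeas.aemeasurable]
    have hsub : ∀ t : ℝ, 0 < t →
        {a : E | t ≤ ‖a‖ ^ (-β)} ⊆ closedBall 0 (t ^ (-β⁻¹)) := by
      intro t ht a ha
      simp only [mem_setOf_eq] at ha
      have ha0 : a ≠ 0 := by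
        rintro rfl
        rw [norm_zero, Real.zero_rpow (neg_ne_zero.2 h0.ne')] at ha
        linarith
      have hna : 0 < ‖a‖ := norm_pos_iff.2 ha0
      simp only [mem_closedBall_zero_iff]
      have hz : -β⁻¹ ≤ 0 := neg_nonpos.2 (inv_nonneg.2 h0.le)
      have := Real.rpow_le_rpow_of_nonpos ht ha hz
      rwa [← Real.rpow_mul hna.le, neg_mul_neg, mul_inv_cancel₀ h0.ne', Real.rpow_one] at this
    calc
      ∫⁻ t in Ioi (0:ℝ), μ {a : E | t ≤ ‖a‖ ^ (-β)}
          ≤ (∫⁻ t in Ioc (0:ℝ) 1, μ {a : E | t ≤ ‖a‖ ^ (-β)}) +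
            ∫⁻ t in Ioi (1:ℝ), μ {a : E | t ≤ ‖a‖ ^ (-β)} :=
        le_trans (lintegral_mono_set Ioi_subset_Ioc_union_Ioi) (lintegral_union_le _ _ _)
      _ < ∞ := by
        refine ENNReal.add_lt_top.2 ⟨?_, ?_⟩
        · calc
            (∫⁻ t in Ioc (0:ℝ) 1, μ {a : E | t ≤ ‖a‖ ^ (-β)})
                ≤ ∫⁻ _ in Ioc (0:ℝ) 1, volume (ball (0:E) 1) := by
              refine lintegral_mono fun t => ?_
              calc μ {a : E | t ≤ ‖a‖ ^ (-β)} ≤ μ univ := measure_mono (subset_univ _)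
                _ = volume (ball (0:E) 1) := by rw [hμ, Measure.restrict_apply_univ]
            _ < ∞ := by
              rw [setLIntegral_const]
              exact ENNReal.mul_lt_top measure_ball_lt_top (by simp)
        · have hb : ∀ t ∈ Ioi (1:ℝ), μ {a : E | t ≤ ‖a‖ ^ (-β)} ≤
              ENNReal.ofReal (t ^ (-((d:ℝ)/β))) * volume (ball (0:E) 1) := by
            intro t ht
            have ht0 : (0:ℝ) < t := lt_trans one_pos ht
            calc μ {a : E | t ≤ ‖a‖ ^ (-β)}
                ≤ volume (closedBall (0:E) (t ^ (-β⁻¹))) :=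
                  le_trans (Measure.le_iff'.1 Measure.restrict_le_self _)
                    (measure_mono (hsub t ht0))
              _ = ENNReal.ofReal ((t ^ (-β⁻¹)) ^ (Module.finrank ℝ E)) *
                    volume (ball (0:E) 1) :=
                  Measure.addHaar_closedBall _ _ (rpow_nonneg ht0.le _)
              _ = ENNReal.ofReal (t ^ (-((d:ℝ)/β))) * volume (ball (0:E) 1) := by
                  congr 2
                  rw [← Real.rpow_natCast (t ^ (-β⁻¹)) _, ← Real.rpow_mul ht0.le]
                  congr 1
                  have hfr : Module.finrank ℝ E = d := finrank_euclideanSpace_fin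
                  rw [hfr]
                  field_simp
          calc
            (∫⁻ t in Ioi (1:ℝ), μ {a : E | t ≤ ‖a‖ ^ (-β)})
                ≤ ∫⁻ t in Ioi (1:ℝ),
                  ENNReal.ofReal (t ^ (-((d:ℝ)/β))) * volume (ball (0:E) 1) :=
              setLIntegral_mono' measurableSet_Ioi hb
            _ < ∞ := by
              rw [lintegral_mul_const' _ _ measure_ball_lt_top.ne]
              refine ENNReal.mul_lt_top ?_ measure_ball_lt_top
              refine IntegrableOn.setLIntegral_lt_top ?_
              refine integrableOn_Ioi_rpow_of_lt ?_ one_pos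
              rw [neg_lt_neg_iff, lt_div_iff₀ h0]
              linarith

theorem g_int (d : ℕ) (α : ℝ) (hα : 0 < α) (β : ℝ) (h0 : 0 ≤ β) (hβ : β < d) :
    Integrable (fun u : EuclideanSpace ℝ (Fin d) =>
      min 1 (‖u‖ ^ (-((d:ℝ)+α))) * ‖u‖ ^ (-β)) volume := by
  set E := EuclideanSpace ℝ (Fin d)
  have hmeas : Measurable (fun u : E => min 1 (‖u‖ ^ (-((d:ℝ)+α))) * ‖u‖ ^ (-β)) := by fun_prop
  have hd0 : (0:ℝ) < d := lt_of_le_of_lt h0 hβ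
  have hda : (0:ℝ) < (d:ℝ) + α := by linarith
  have hnn : ∀ u : E, 0 ≤ min 1 (‖u‖ ^ (-((d:ℝ)+α))) * ‖u‖ ^ (-β) := by
    intro u
    have := rpow_nonneg (norm_nonneg u) (-((d:ℝ)+α))
    have := rpow_nonneg (norm_nonneg u) (-β)
    positivity
  rw [← integrableOn_univ, ← union_compl_self (ball (0:E) 1)]
  refine IntegrableOn.union ?_ ?_
  · -- on the ball
    have hball : IntegrableOn (fun x : E => ‖x‖ ^ (-β)) (ball 0 1) volume := by
      rcases h0.eq_or_lt with h | h
      · have : (fun x : E => ‖x‖ ^ (-β)) = fun _ => (1:ℝ) := by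
          funext x; rw [← h, neg_zero, Real.rpow_zero]
        rw [this]
        exact (integrableOn_const_iff).2 (Or.inr measure_ball_lt_top)
      · exact ball_int d β h hβ
    refine hball.mono' hmeas.aestronglyMeasurable ?_
    refine ae_of_all _ fun u => ?_
    rw [Real.norm_of_nonneg (hnn u)]
    have h1 : min 1 (‖u‖ ^ (-((d:ℝ)+α))) ≤ 1 := min_le_left _ _
    have h2 : (0:ℝ) ≤ ‖u‖ ^ (-β) := rpow_nonneg (norm_nonneg u) _
    calc min 1 (‖u‖ ^ (-((d:ℝ)+α))) * ‖u‖ ^ (-β) ≤ 1 * ‖u‖ ^ (-β) := by gcongr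
      _ = ‖u‖ ^ (-β) := one_mul _
  · -- off the ball
    have hint : Integrable (fun u : E => (2:ℝ) ^ ((d:ℝ)+α) * (1+‖u‖) ^ (-((d:ℝ)+α))) volume := by
      refine Integrable.const_mul ?_ _
      refine integrable_one_add_norm ?_
      rw [finrank_euclideanSpace_fin]
      linarith
    refine (hint.integrableOn).mono' hmeas.aestronglyMeasurable ?_
    filter_upwards [ae_restrict_mem measurableSet_ball.compl] with u hu
    rw [mem_compl_iff, mem_ball_zero_iff, not_lt] at hu
    rw [Real.norm_of_nonneg (hnn u)]
    have hupos : (0:ℝ) < ‖u‖ := lt_of_lt_of_le one_pos hu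
    have h2 : ‖u‖ ^ (-β) ≤ 1 := rpow_le_one_of_one_le_of_nonpos hu (neg_nonpos.2 h0)
    have h1 : min 1 (‖u‖ ^ (-((d:ℝ)+α))) ≤ ‖u‖ ^ (-((d:ℝ)+α)) := min_le_right _ _
    have h3 : ‖u‖ ^ (-((d:ℝ)+α)) ≤ (2:ℝ) ^ ((d:ℝ)+α) * (1+‖u‖) ^ (-((d:ℝ)+α)) := by
      have hmid : (1+‖u‖)/2 ≤ ‖u‖ := by linarith
      have := Real.rpow_le_rpow_of_nonpos (by positivity : (0:ℝ) < (1+‖u‖)/2) hmid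
        (neg_nonpos.2 hda.le)
      refine le_trans this (le_of_eq ?_)
      rw [Real.div_rpow (by positivity) (by norm_num : (0:ℝ) ≤ 2), div_eq_mul_inv,
        ← Real.rpow_neg (by norm_num : (0:ℝ) ≤ 2), neg_neg, mul_comm]
    calc min 1 (‖u‖ ^ (-((d:ℝ)+α))) * ‖u‖ ^ (-β)
        ≤ ‖u‖ ^ (-((d:ℝ)+α)) * 1 :=
          mul_le_mul h1 h2 (rpow_nonneg (norm_nonneg u) _) (rpow_nonneg (norm_nonneg u) _)
      _ = ‖u‖ ^ (-((d:ℝ)+α)) := mul_one _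
      _ ≤ (2:ℝ) ^ ((d:ℝ)+α) * (1+‖u‖) ^ (-((d:ℝ)+α)) := h3

theorem scalar_id (α dR β s r : ℝ) (hα : 0 < α) (hs : 0 < s) (hr : 0 ≤ r) :
    min (s ^ (-dR/α)) (s / r ^ (dR+α)) * r ^ (-β)
      = (s ^ (-dR/α) * (s ^ (1/α)) ^ (-β)) *
        (min 1 ((((s ^ (1/α))⁻¹ * r)) ^ (-(dR+α))) * ((s ^ (1/α))⁻¹ * r) ^ (-β)) := by
  set c := s ^ (1/α) with hcdef
  have hc : 0 < c := rpow_pos_of_pos hs _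
  have h1 : (c⁻¹ * r) ^ (-(dR+α)) = c ^ (dR+α) * r ^ (-(dR+α)) := by
    rw [Real.mul_rpow (inv_nonneg.2 hc.le) hr, Real.inv_rpow hc.le, ← Real.rpow_neg hc.le,
      neg_neg]
  have h2 : (c⁻¹ * r) ^ (-β) = c ^ β * r ^ (-β) := by
    rw [Real.mul_rpow (inv_nonneg.2 hc.le) hr, Real.inv_rpow hc.le, ← Real.rpow_neg hc.le,
      neg_neg]
  have h3 : s ^ (-dR/α) * c ^ (dR+α) = s := by
    rw [hcdef, ← Real.rpow_mul hs.le, ← Real.rpow_add hs]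
    rw [show -dR/α + 1/α * (dR+α) = 1 by field_simp; ring, Real.rpow_one]
  have h4 : c ^ (-β) * c ^ β = 1 := by
    rw [← Real.rpow_add hc, neg_add_cancel, Real.rpow_zero]
  rw [h1, h2]
  have h5 : s / r ^ (dR+α) = s ^ (-dR/α) * (c ^ (dR+α) * r ^ (-(dR+α))) := by
    rw [← mul_assoc, h3, Real.rpow_neg hr, div_eq_mul_inv]
  have h6 : min (s ^ (-dR/α)) (s ^ (-dR/α) * (c ^ (dR+α) * r ^ (-(dR+α))))
      = s ^ (-dR/α) * min 1 (c ^ (dR+α) * r ^ (-(dR+α))) := by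
    rw [mul_min_of_nonneg _ _ (rpow_nonneg hs.le (-dR/α)), mul_one]
  rw [h5, h6,
    show s ^ (-dR/α) * c ^ (-β) * (min 1 (c ^ (dR+α) * r ^ (-(dR+α))) * (c ^ β * r ^ (-β)))
      = (c ^ (-β) * c ^ β) * (s ^ (-dR/α) * min 1 (c ^ (dR+α) * r ^ (-(dR+α))) * r ^ (-β))
      by ring, h4, one_mul, mul_assoc]

theorem q_value (d : ℕ) (α β s : ℝ) (hα : 0 < α) (hs : 0 < s)
    (y : EuclideanSpace ℝ (Fin d))
    (hg : Integrable (fun u : EuclideanSpace ℝ (Fin d) =>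
      min 1 (‖u‖ ^ (-((d:ℝ)+α))) * ‖u‖ ^ (-β)) volume) :
    Integrable (fun w : EuclideanSpace ℝ (Fin d) =>
      min (s ^ (-(d:ℝ)/α)) (s / dist y w ^ ((d:ℝ)+α)) * dist y w ^ (-β)) volume ∧
    (∫ w : EuclideanSpace ℝ (Fin d),
        min (s ^ (-(d:ℝ)/α)) (s / dist y w ^ ((d:ℝ)+α)) * dist y w ^ (-β))
      = s ^ (-β/α) * ∫ u : EuclideanSpace ℝ (Fin d),
          min 1 (‖u‖ ^ (-((d:ℝ)+α))) * ‖u‖ ^ (-β) := by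
  set c := s ^ (1/α) with hcdef
  have hc : 0 < c := rpow_pos_of_pos hs _
  set g : EuclideanSpace ℝ (Fin d) → ℝ := fun u => min 1 (‖u‖ ^ (-((d:ℝ)+α))) * ‖u‖ ^ (-β) with hgdef
  set K := s ^ (-(d:ℝ)/α) * c ^ (-β) with hK
  have key : (fun w : EuclideanSpace ℝ (Fin d) =>
      min (s ^ (-(d:ℝ)/α)) (s / dist y w ^ ((d:ℝ)+α)) * dist y w ^ (-β))
      = fun w : EuclideanSpace ℝ (Fin d) => K * g (c⁻¹ • (w - y)) := by
    funext w
    have hnrm : ‖c⁻¹ • (w - y)‖ = c⁻¹ * ‖w - y‖ := by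
      rw [norm_smul, Real.norm_eq_abs, abs_of_pos (inv_pos.2 hc)]
    have hdist : dist y w = ‖w - y‖ := by rw [dist_comm, dist_eq_norm]
    rw [hdist, hgdef]
    simp only [hnrm]
    exact scalar_id α d β s ‖w - y‖ hα hs (norm_nonneg _)
  have hint1 : Integrable (fun x : EuclideanSpace ℝ (Fin d) => g (c⁻¹ • x)) volume :=
    hg.comp_smul (inv_ne_zero hc.ne')
  have hint2 : Integrable (fun x : EuclideanSpace ℝ (Fin d) => K * g (c⁻¹ • x)) volume := hint1.const_mul K
  constructor
  · rw [key]
    exact hint2.comp_sub_right y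
  · rw [key]
    have t1 : (∫ w : EuclideanSpace ℝ (Fin d), K * g (c⁻¹ • (w - y))) = ∫ x : EuclideanSpace ℝ (Fin d), K * g (c⁻¹ • x) :=
      integral_sub_right_eq_self (fun x : EuclideanSpace ℝ (Fin d) => K * g (c⁻¹ • x)) y
    rw [t1, MeasureTheory.integral_const_mul,
      Measure.integral_comp_inv_smul_of_nonneg volume g hc.le, smul_eq_mul, ← mul_assoc]
    congr 1
    rw [finrank_euclideanSpace_fin, hK, hcdef, ← Real.rpow_natCast (s ^ (1/α)) d,
      ← Real.rpow_mul hs.le, ← Real.rpow_mul hs.le, ← Real.rpow_add hs, ← Real.rpow_add hs]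
    congr 1
    field_simp
    ring

theorem pw_bound (γ T r : ℝ) (hγ : 0 ≤ γ) (hT : 0 < T) (hr : 0 ≤ r) :
    (1 + T / r) ^ γ ≤ 2 ^ γ + 2 ^ γ * T ^ γ * r ^ (-γ) := by
  have h2γ : (1:ℝ) ≤ 2 ^ γ := by
    calc (1:ℝ) = 1 ^ γ := (Real.one_rpow γ).symm
    _ ≤ 2 ^ γ := Real.rpow_le_rpow zero_le_one one_le_two hγ
  have hTγ : (0:ℝ) ≤ T ^ γ := rpow_nonneg hT.le γ
  have hrγ : (0:ℝ) ≤ r ^ (-γ) := rpow_nonneg hr (-γ)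
  have hprod : (0:ℝ) ≤ 2 ^ γ * T ^ γ * r ^ (-γ) := by positivity
  rcases hr.eq_or_lt with h | h
  · rw [← h] at hprod ⊢
    rw [div_zero, add_zero, Real.one_rpow]
    linarith
  · rcases le_or_gt T r with hTr | hTr
    · have : (1 + T / r) ^ γ ≤ 2 ^ γ := by
        refine Real.rpow_le_rpow (by positivity) ?_ hγ
        have : T / r ≤ 1 := (div_le_one h).2 hTr
        linarith
      linarith
    · have h1 : (1 + T / r) ^ γ ≤ (2 * (T / r)) ^ γ := by
        refine Real.rpow_le_rpow (by positivity) ?_ hγ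
        have : 1 < T / r := (one_lt_div h).2 hTr
        linarith
      have h2 : (2 * (T / r)) ^ γ = 2 ^ γ * T ^ γ * r ^ (-γ) := by
        rw [Real.mul_rpow (by norm_num) (by positivity),
          Real.div_rpow hT.le hr, Real.rpow_neg hr, div_eq_mul_inv, mul_assoc]
      nlinarith

theorem stmt7 (d : ℕ) (hd : 1 ≤ d) (α γ : ℝ) (hα : 0 < α) (hα2 : α < 2)
    (hγ : 0 ≤ γ) (hγα : γ < min α d) :
    ∃ C : ℝ, 0 < C ∧ ∀ t : ℝ, 0 < t → ∀ y : EuclideanSpace ℝ (Fin d),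
      (∫ s in Set.Ioo (0 : ℝ) t, ∫ w : EuclideanSpace ℝ (Fin d),
          min (s ^ (-(d : ℝ) / α)) (s / (dist y w) ^ ((d : ℝ) + α)) *
            (1 + t ^ (1 / α) / dist y w) ^ γ)
        ≤ C * t := by
  have hγa : γ < α := lt_of_lt_of_le hγα (min_le_left _ _)
  have hγd : γ < (d:ℝ) := lt_of_lt_of_le hγα (min_le_right _ _)
  have hd0 : (0:ℝ) < d := by exact_mod_cast Nat.pos_of_ne_zero (by omega)
  have hg0 : Integrable (fun u : EuclideanSpace ℝ (Fin d) =>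
      min 1 (‖u‖ ^ (-((d:ℝ)+α))) * ‖u‖ ^ (-(0:ℝ))) volume := g_int d α hα 0 le_rfl hd0
  have hgγ : Integrable (fun u : EuclideanSpace ℝ (Fin d) =>
      min 1 (‖u‖ ^ (-((d:ℝ)+α))) * ‖u‖ ^ (-γ)) volume := g_int d α hα γ hγ hγd
  set J0 : ℝ := ∫ u : EuclideanSpace ℝ (Fin d),
      min 1 (‖u‖ ^ (-((d:ℝ)+α))) * ‖u‖ ^ (-(0:ℝ)) with hJ0def
  set Jγ : ℝ := ∫ u : EuclideanSpace ℝ (Fin d),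
      min 1 (‖u‖ ^ (-((d:ℝ)+α))) * ‖u‖ ^ (-γ) with hJγdef
  have hJ0 : 0 ≤ J0 := integral_nonneg fun u => by
    have h1 : (0:ℝ) ≤ ‖u‖ ^ (-((d:ℝ)+α)) := rpow_nonneg (norm_nonneg _) _
    have h2 : (0:ℝ) ≤ ‖u‖ ^ (-(0:ℝ)) := rpow_nonneg (norm_nonneg _) _
    positivity
  have hJγ : 0 ≤ Jγ := integral_nonneg fun u => by
    have h1 : (0:ℝ) ≤ ‖u‖ ^ (-((d:ℝ)+α)) := rpow_nonneg (norm_nonneg _) _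
    have h2 : (0:ℝ) ≤ ‖u‖ ^ (-γ) := rpow_nonneg (norm_nonneg _) _
    positivity
  set δ : ℝ := 1 - γ/α with hδdef
  have hδ : 0 < δ := by
    have : γ/α < 1 := (div_lt_one hα).2 hγa
    simp only [hδdef]; linarith
  have h2γ0 : (0:ℝ) ≤ 2 ^ γ := rpow_nonneg (by norm_num) _
  refine ⟨2 ^ γ * J0 + 2 ^ γ * Jγ / δ + 1, by positivity, ?_⟩
  intro t ht y
  set T : ℝ := t ^ (1/α) with hTdef
  have hT : 0 < T := rpow_pos_of_pos ht _
  -- inner bound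
  have inner_bound : ∀ s ∈ Ioo (0:ℝ) t,
      (∫ w : EuclideanSpace ℝ (Fin d),
        min (s ^ (-(d : ℝ) / α)) (s / (dist y w) ^ ((d : ℝ) + α)) *
          (1 + T / dist y w) ^ γ)
      ≤ 2 ^ γ * J0 + (2 ^ γ * T ^ γ * Jγ) * s ^ (-γ/α) := by
    intro s hs
    obtain ⟨hq0int, hq0val⟩ := q_value d α 0 s hα hs.1 y hg0
    obtain ⟨hqγint, hqγval⟩ := q_value d α γ s hα hs.1 y hgγ
    have hqnn : ∀ w : EuclideanSpace ℝ (Fin d),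
        0 ≤ min (s ^ (-(d : ℝ) / α)) (s / (dist y w) ^ ((d : ℝ) + α)) := fun w =>
      le_min (rpow_nonneg hs.1.le _) (div_nonneg hs.1.le (rpow_nonneg dist_nonneg _))
    have hmono : (∫ w : EuclideanSpace ℝ (Fin d),
        min (s ^ (-(d : ℝ) / α)) (s / (dist y w) ^ ((d : ℝ) + α)) *
          (1 + T / dist y w) ^ γ)
        ≤ ∫ w : EuclideanSpace ℝ (Fin d),
          (2 ^ γ) * (min (s ^ (-(d : ℝ) / α)) (s / (dist y w) ^ ((d : ℝ) + α)) *
            dist y w ^ (-(0:ℝ))) +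
          (2 ^ γ * T ^ γ) * (min (s ^ (-(d : ℝ) / α)) (s / (dist y w) ^ ((d : ℝ) + α)) *
            dist y w ^ (-γ)) := by
      refine integral_mono_of_nonneg (ae_of_all _ fun w => ?_)
        ((hq0int.const_mul _).add (hqγint.const_mul _)) (ae_of_all _ fun w => ?_)
      · exact mul_nonneg (hqnn w) (rpow_nonneg (by positivity) _)
      · have hb := pw_bound γ T (dist y w) hγ hT dist_nonneg
        have := mul_le_mul_of_nonneg_left hb (hqnn w)
        calc min (s ^ (-(d : ℝ) / α)) (s / (dist y w) ^ ((d : ℝ) + α)) *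
              (1 + T / dist y w) ^ γ
            ≤ min (s ^ (-(d : ℝ) / α)) (s / (dist y w) ^ ((d : ℝ) + α)) *
              (2 ^ γ + 2 ^ γ * T ^ γ * dist y w ^ (-γ)) := this
          _ = _ := by simp only [neg_zero, Real.rpow_zero]; ring
    refine le_trans hmono ?_
    rw [integral_add ((hq0int.const_mul _)) ((hqγint.const_mul _)),
      MeasureTheory.integral_const_mul, MeasureTheory.integral_const_mul, hq0val, hqγval]
    have e0 : s ^ (-(0:ℝ)/α) = 1 := by rw [neg_zero, zero_div, Real.rpow_zero]
    rw [e0, ← hJ0def, ← hJγdef]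
    exact le_of_eq (by ring)
  -- outer integral
  have houter_int : IntegrableOn
      (fun s : ℝ => 2 ^ γ * J0 + (2 ^ γ * T ^ γ * Jγ) * s ^ (-γ/α)) (Ioo 0 t) volume := by
    refine Integrable.add ((integrableOn_const_iff).2 (Or.inr (by simp [Real.volume_Ioo]))) ?_
    refine Integrable.const_mul ?_ _
    have h1 : IntervalIntegrable (fun s : ℝ => s ^ (-γ/α)) volume 0 t :=
      intervalIntegral.intervalIntegrable_rpow' (by rw [neg_div]; linarith [(div_lt_one hα).2 hγa])
    exact ((intervalIntegrable_iff_integrableOn_Ioc_of_le ht.le).1 h1).mono_set Ioo_subset_Ioc_self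
  have hmono2 : (∫ s in Set.Ioo (0 : ℝ) t, ∫ w : EuclideanSpace ℝ (Fin d),
          min (s ^ (-(d : ℝ) / α)) (s / (dist y w) ^ ((d : ℝ) + α)) *
            (1 + t ^ (1 / α) / dist y w) ^ γ)
      ≤ ∫ s in Set.Ioo (0 : ℝ) t, (2 ^ γ * J0 + (2 ^ γ * T ^ γ * Jγ) * s ^ (-γ/α)) := by
    refine integral_mono_of_nonneg ?_ houter_int ?_
    · filter_upwards [ae_restrict_mem measurableSet_Ioo] with s hs
      refine integral_nonneg fun w => ?_
      have hqnn : 0 ≤ min (s ^ (-(d : ℝ) / α)) (s / (dist y w) ^ ((d : ℝ) + α)) :=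
        le_min (rpow_nonneg hs.1.le _) (div_nonneg hs.1.le (rpow_nonneg dist_nonneg _))
      exact mul_nonneg hqnn (rpow_nonneg (by positivity) _)
    · filter_upwards [ae_restrict_mem measurableSet_Ioo] with s hs
      exact inner_bound s hs
  refine le_trans hmono2 ?_
  -- compute the outer integral
  have hrpowval : (∫ s in Set.Ioo (0:ℝ) t, s ^ (-γ/α)) = t ^ δ / δ := by
    have hm1 : (-1:ℝ) < -γ/α := by
      rw [neg_div]; have := (div_lt_one hα).2 hγa; linarith
    rw [← MeasureTheory.integral_Ioc_eq_integral_Ioo, ← intervalIntegral.integral_of_le ht.le,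
      integral_rpow (Or.inl hm1)]
    have hexp : -γ/α + 1 = δ := by rw [hδdef]; ring
    rw [hexp, Real.zero_rpow hδ.ne']
    ring
  have hrpowint : IntegrableOn (fun s : ℝ => s ^ (-γ/α)) (Ioo 0 t) volume := by
    have h1 : IntervalIntegrable (fun s : ℝ => s ^ (-γ/α)) volume 0 t :=
      intervalIntegral.intervalIntegrable_rpow'
        (by rw [neg_div]; have := (div_lt_one hα).2 hγa; linarith)
    exact ((intervalIntegrable_iff_integrableOn_Ioc_of_le ht.le).1 h1).mono_set Ioo_subset_Ioc_self
  have hval : (∫ s in Set.Ioo (0 : ℝ) t,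
      (2 ^ γ * J0 + (2 ^ γ * T ^ γ * Jγ) * s ^ (-γ/α)))
      = 2 ^ γ * J0 * t + (2 ^ γ * T ^ γ * Jγ) * (t ^ δ / δ) := by
    rw [integral_add ((integrableOn_const_iff (C := 2 ^ γ * J0)).2 (Or.inr (by simp [Real.volume_Ioo])))
      (hrpowint.const_mul _),
      MeasureTheory.integral_const_mul (2 ^ γ * T ^ γ * Jγ) (fun s : ℝ => s ^ (-γ/α)),
      hrpowval]
    congr 1
    rw [setIntegral_const, Real.volume_real_Ioo, smul_eq_mul,
      max_eq_left (by linarith)]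
    ring
  rw [hval]
  have hTγt : T ^ γ * t ^ δ = t := by
    rw [hTdef, ← Real.rpow_mul ht.le, ← Real.rpow_add ht,
      show 1/α*γ + δ = 1 by rw [hδdef]; field_simp; ring, Real.rpow_one]
  have hsecond : (2 ^ γ * T ^ γ * Jγ) * (t ^ δ / δ) = (2 ^ γ * Jγ / δ) * t := by
    rw [show (2 ^ γ * T ^ γ * Jγ) * (t ^ δ / δ) = (2 ^ γ * Jγ / δ) * (T ^ γ * t ^ δ) by ring,
      hTγt]
  rw [hsecond, show (2 ^ γ * J0 + 2 ^ γ * Jγ / δ + 1) * t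
      = 2 ^ γ * J0 * t + (2 ^ γ * Jγ / δ) * t + t by ring]
  linarith
end

section
/- Suppose |F(z,w)| ≤ A·min(|z-w|^β, 1) for some A > 0 and β > α, with α ∈ (0,2), γ ∈ [0, min(α,d)). Then there exists C = C(β, d, α, γ) > 0 such that for every Borel D ⊂ ℝ^d, every t ∈ (0, ∞) and every y ∈ D, ∫_0^t ∫_{ℝ^d × ℝ^d} q(s,y,w)·(1 + (|z-w| ∧ t^{1/α})/|y-w|)^γ · (|F(z,w)| + |F(w,z)|)/|z-w|^{d+α} dz dw ds ≤ C·A·t, where q(s,y,w) = min(s^{-d/α}, s/|y-w|^{d+α}). -/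
open Real MeasureTheory Set Metric

section radial

variable {E : Type*} [NormedAddCommGroup E] [NormedSpace ℝ E] [MeasurableSpace E] [BorelSpace E]
  [Nontrivial E] [FiniteDimensional ℝ E] (μ : Measure E) [μ.IsAddHaarMeasure]

lemma my_lintegral_norm (g : ℝ → ENNReal) (hg : Measurable g) :
    ∫⁻ x, g ‖x‖ ∂μ
      = μ.toSphere univ *
        ∫⁻ r in Ioi (0:ℝ), ENNReal.ofReal (r ^ (Module.finrank ℝ E - 1)) * g r := by
  have last : ∫⁻ r : Ioi (0:ℝ), g r ∂(Measure.volumeIoiPow (Module.finrank ℝ E - 1))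
      = ∫⁻ r in Ioi (0:ℝ), ENNReal.ofReal (r ^ (Module.finrank ℝ E - 1)) * g r := by
    have h1 := @lintegral_withDensity_eq_lintegral_mul (Ioi (0:ℝ)) _
      (Measure.comap Subtype.val volume)
      (fun r : Ioi (0:ℝ) => ENNReal.ofReal ((r:ℝ) ^ (Module.finrank ℝ E - 1)))
      ((measurable_subtype_coe.pow_const _).ennreal_ofReal)
      (fun r : Ioi (0:ℝ) => g r) (hg.comp measurable_subtype_coe)
    rw [Measure.volumeIoiPow, h1,
      ← lintegral_subtype_comap measurableSet_Ioi
        (fun r => ENNReal.ofReal (r ^ (Module.finrank ℝ E - 1)) * g r)]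
    rfl
  calc
    ∫⁻ x, g ‖x‖ ∂μ = ∫⁻ x : ({(0:E)}ᶜ : Set E), g ‖x.1‖ ∂(μ.comap (↑)) := by
      rw [lintegral_subtype_comap (measurableSet_singleton (0:E)).compl
          (fun x => g ‖x‖), MeasureTheory.restrict_compl_singleton]
    _ = ∫⁻ p : sphere (0:E) 1 × Ioi (0:ℝ), g p.2
          ∂(μ.toSphere.prod (.volumeIoiPow (Module.finrank ℝ E - 1))) :=
      by
        rw [← μ.measurePreserving_homeomorphUnitSphereProd.lintegral_comp_emb
          (Homeomorph.measurableEmbedding _) (fun p => g p.2)]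
        simp [homeomorphUnitSphereProd_apply_snd_coe]
    _ = μ.toSphere univ *
          ∫⁻ r : Ioi (0:ℝ), g r ∂(Measure.volumeIoiPow (Module.finrank ℝ E - 1)) := by
      rw [lintegral_prod (fun p : sphere (0:E) 1 × Ioi (0:ℝ) => g ↑p.2)
        ((hg.comp (measurable_subtype_coe.comp measurable_snd)).aemeasurable)]
      simp [lintegral_const, mul_comm]
    _ = _ := by rw [last]

lemma my_integrable_norm (f : ℝ → ℝ) (hf : Measurable f) (h0 : ∀ r, 0 ≤ r → 0 ≤ f r)
    (hint : IntegrableOn (fun r => r ^ (Module.finrank ℝ E - 1) * f r) (Ioi (0:ℝ))) :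
    Integrable (fun x : E => f ‖x‖) μ := by
  refine ⟨(hf.comp measurable_norm).aestronglyMeasurable, ?_⟩
  rw [hasFiniteIntegral_iff_ofReal (ae_of_all _ fun x => h0 _ (norm_nonneg x))]
  rw [show (fun x : E => ENNReal.ofReal (f ‖x‖))
      = fun x : E => (fun r => ENNReal.ofReal (f r)) ‖x‖ from rfl,
    my_lintegral_norm μ (fun r => ENNReal.ofReal (f r)) (hf.ennreal_ofReal)]
  refine ENNReal.mul_lt_top (measure_lt_top _ _) ?_
  calc ∫⁻ r in Ioi (0:ℝ), ENNReal.ofReal (r ^ (Module.finrank ℝ E - 1)) * ENNReal.ofReal (f r)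
      = ∫⁻ r in Ioi (0:ℝ), ENNReal.ofReal (r ^ (Module.finrank ℝ E - 1) * f r) := by
        refine setLIntegral_congr_fun measurableSet_Ioi (fun r hr => ?_)
        rw [ENNReal.ofReal_mul (pow_nonneg (le_of_lt hr) _)]
    _ < ⊤ := hint.setLIntegral_lt_top

end radial

section oneD

lemma intOn_Ioi_split {h : ℝ → ℝ} (h1 : IntegrableOn h (Ioc (0:ℝ) 1))
    (h2 : IntegrableOn h (Ioi (1:ℝ))) : IntegrableOn h (Ioi (0:ℝ)) := by
  rw [← Ioc_union_Ioi_eq_Ioi (zero_le_one (α := ℝ))]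
  exact h1.union h2

lemma intOn_Ioc01_rpow {p : ℝ} (hp : -1 < p) :
    IntegrableOn (fun r : ℝ => r ^ p) (Ioc (0:ℝ) 1) :=
  (intervalIntegrable_iff_integrableOn_Ioc_of_le zero_le_one).mp
    (intervalIntegral.intervalIntegrable_rpow' hp)

variable {d : ℕ} {α β γ : ℝ}

lemma meas_aux1 : Measurable (fun r : ℝ => r ^ (d-1) * (min (r^β) 1 / r^((d:ℝ)+α))) := by
  fun_prop

lemma int1d_f1 (hd : 1 ≤ d) (hα : 0 < α) (hβ : α < β) :
    IntegrableOn (fun r : ℝ => r ^ (d-1) * (min (r^β) 1 / r^((d:ℝ)+α))) (Ioi (0:ℝ)) := by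
  apply intOn_Ioi_split
  · refine Integrable.mono' (intOn_Ioc01_rpow (p := β - α - 1) (by linarith))
      meas_aux1.aestronglyMeasurable ?_
    filter_upwards [ae_restrict_mem measurableSet_Ioc] with r hr
    obtain ⟨hr0, hr1⟩ := hr
    have hden : (0:ℝ) < r ^ ((d:ℝ)+α) := rpow_pos_of_pos hr0 _
    rw [Real.norm_eq_abs, abs_of_nonneg (by positivity)]
    calc r ^ (d-1) * (min (r^β) 1 / r^((d:ℝ)+α))
        ≤ r ^ (d-1) * (r^β / r^((d:ℝ)+α)) := by
          gcongr <;> first | exact min_le_left _ _ | exact min_le_right _ _ | positivity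
      _ = r ^ (β - α - 1) := by
          rw [← Real.rpow_natCast r (d-1), ← Real.rpow_sub hr0, ← Real.rpow_add hr0]
          congr 1
          rw [Nat.cast_sub hd]
          push_cast
          ring
  · refine Integrable.mono' (integrableOn_Ioi_rpow_of_lt (a := -1-α)
      (by linarith) one_pos) meas_aux1.aestronglyMeasurable ?_
    filter_upwards [ae_restrict_mem measurableSet_Ioi] with r hr
    have hr0 : (0:ℝ) < r := lt_trans one_pos hr
    have hden : (0:ℝ) < r ^ ((d:ℝ)+α) := rpow_pos_of_pos hr0 _
    rw [Real.norm_eq_abs, abs_of_nonneg (by positivity)]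
    calc r ^ (d-1) * (min (r^β) 1 / r^((d:ℝ)+α))
        ≤ r ^ (d-1) * (1 / r^((d:ℝ)+α)) := by
          gcongr <;> first | exact min_le_left _ _ | exact min_le_right _ _ | positivity
      _ = r ^ (-1-α) := by
          rw [one_div, ← Real.rpow_neg_one (r ^ ((d:ℝ)+α)), ← Real.rpow_natCast r (d-1),
            ← Real.rpow_mul hr0.le, ← Real.rpow_add hr0]
          congr 1
          rw [Nat.cast_sub hd]
          push_cast
          ring

lemma meas_aux2 : Measurable (fun r : ℝ => r ^ (d-1) * min 1 (r^(-((d:ℝ)+α)))) := by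
  fun_prop

lemma int1d_f2 (hd : 1 ≤ d) (hα : 0 < α) :
    IntegrableOn (fun r : ℝ => r ^ (d-1) * min 1 (r^(-((d:ℝ)+α)))) (Ioi (0:ℝ)) := by
  apply intOn_Ioi_split
  · refine Integrable.mono' ((integrableOn_const_iff (C := (1:ℝ))).mpr (Or.inr measure_Ioc_lt_top))
      meas_aux2.aestronglyMeasurable ?_
    filter_upwards [ae_restrict_mem measurableSet_Ioc] with r hr
    obtain ⟨hr0, hr1⟩ := hr
    rw [Real.norm_eq_abs, abs_of_nonneg (by positivity)]
    calc r ^ (d-1) * min 1 (r^(-((d:ℝ)+α))) ≤ 1 * 1 := by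
          apply mul_le_mul (pow_le_one₀ hr0.le hr1) (min_le_left _ _)
            (le_min zero_le_one (rpow_nonneg hr0.le _)) zero_le_one
      _ = 1 := one_mul 1
  · refine Integrable.mono' (integrableOn_Ioi_rpow_of_lt (a := -1-α)
      (by linarith) one_pos) meas_aux2.aestronglyMeasurable ?_
    filter_upwards [ae_restrict_mem measurableSet_Ioi] with r hr
    have hr0 : (0:ℝ) < r := lt_trans one_pos hr
    rw [Real.norm_eq_abs, abs_of_nonneg (by positivity)]
    calc r ^ (d-1) * min 1 (r^(-((d:ℝ)+α)))
        ≤ r ^ (d-1) * r^(-((d:ℝ)+α)) := by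
          gcongr <;> first | exact min_le_left _ _ | exact min_le_right _ _ | positivity
      _ = r ^ (-1-α) := by
          rw [← Real.rpow_natCast r (d-1), ← Real.rpow_add hr0]
          congr 1
          rw [Nat.cast_sub hd]
          push_cast
          ring

lemma meas_aux3 : Measurable (fun r : ℝ => r ^ (d-1) * (min 1 (r^(-((d:ℝ)+α))) * r^(-γ))) := by
  fun_prop

lemma int1d_f3 (hd : 1 ≤ d) (hα : 0 < α) (hγ : 0 ≤ γ) (hγd : γ < d) :
    IntegrableOn (fun r : ℝ => r ^ (d-1) * (min 1 (r^(-((d:ℝ)+α))) * r^(-γ))) (Ioi (0:ℝ)) := by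
  apply intOn_Ioi_split
  · refine Integrable.mono' (intOn_Ioc01_rpow (p := (d:ℝ) - 1 - γ) (by linarith))
      meas_aux3.aestronglyMeasurable ?_
    filter_upwards [ae_restrict_mem measurableSet_Ioc] with r hr
    obtain ⟨hr0, hr1⟩ := hr
    rw [Real.norm_eq_abs, abs_of_nonneg (by positivity)]
    calc r ^ (d-1) * (min 1 (r^(-((d:ℝ)+α))) * r^(-γ))
        ≤ r ^ (d-1) * (1 * r^(-γ)) := by
          gcongr <;> first | exact min_le_left _ _ | exact min_le_right _ _ | positivity
      _ = r ^ ((d:ℝ) - 1 - γ) := by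
          rw [one_mul, ← Real.rpow_natCast r (d-1), ← Real.rpow_add hr0]
          congr 1
          rw [Nat.cast_sub hd]
          push_cast
          ring
  · refine Integrable.mono' (integrableOn_Ioi_rpow_of_lt (a := -1-α-γ)
      (by linarith) one_pos) meas_aux3.aestronglyMeasurable ?_
    filter_upwards [ae_restrict_mem measurableSet_Ioi] with r hr
    have hr0 : (0:ℝ) < r := lt_trans one_pos hr
    rw [Real.norm_eq_abs, abs_of_nonneg (by positivity)]
    calc r ^ (d-1) * (min 1 (r^(-((d:ℝ)+α))) * r^(-γ))
        ≤ r ^ (d-1) * (r^(-((d:ℝ)+α)) * r^(-γ)) := by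
          gcongr <;> first | exact min_le_left _ _ | exact min_le_right _ _ | positivity
      _ = r ^ (-1-α-γ) := by
          rw [← Real.rpow_natCast r (d-1), ← Real.rpow_add hr0, ← Real.rpow_add hr0]
          congr 1
          rw [Nat.cast_sub hd]
          push_cast
          ring

end oneD

section Elevel

variable {d : ℕ} {α β γ : ℝ}

lemma nontrivialE (hd : 1 ≤ d) : Nontrivial (EuclideanSpace ℝ (Fin d)) := by
  refine ⟨⟨EuclideanSpace.single (⟨0, hd⟩ : Fin d) (1:ℝ), 0, fun h => ?_⟩⟩
  have := congrArg (fun v => v (⟨0, hd⟩ : Fin d)) h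
  simp [EuclideanSpace.single_apply] at this

lemma intE1 (hd : 1 ≤ d) (hα : 0 < α) (hβ : α < β) :
    Integrable (fun u : EuclideanSpace ℝ (Fin d) => min (‖u‖^β) 1 / ‖u‖^((d:ℝ)+α)) volume := by
  haveI := nontrivialE (d := d) hd
  refine my_integrable_norm volume (fun r => min (r^β) 1 / r^((d:ℝ)+α)) (by fun_prop)
    (fun r hr => div_nonneg (le_min (rpow_nonneg hr _) zero_le_one) (rpow_nonneg hr _)) ?_
  simp only [finrank_euclideanSpace_fin]
  exact int1d_f1 hd hα hβ

lemma intE2 (hd : 1 ≤ d) (hα : 0 < α) :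
    Integrable (fun v : EuclideanSpace ℝ (Fin d) => min 1 (‖v‖^(-((d:ℝ)+α)))) volume := by
  haveI := nontrivialE (d := d) hd
  refine my_integrable_norm volume (fun r => min 1 (r^(-((d:ℝ)+α)))) (by fun_prop)
    (fun r hr => le_min zero_le_one (rpow_nonneg hr _)) ?_
  simp only [finrank_euclideanSpace_fin]
  exact int1d_f2 hd hα

lemma intE3 (hd : 1 ≤ d) (hα : 0 < α) (hγ : 0 ≤ γ) (hγd : γ < d) :
    Integrable (fun v : EuclideanSpace ℝ (Fin d) =>
      min 1 (‖v‖^(-((d:ℝ)+α))) * ‖v‖^(-γ)) volume := by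
  haveI := nontrivialE (d := d) hd
  refine my_integrable_norm volume (fun r => min 1 (r^(-((d:ℝ)+α))) * r^(-γ)) (by fun_prop)
    (fun r hr => mul_nonneg (le_min zero_le_one (rpow_nonneg hr _)) (rpow_nonneg hr _)) ?_
  simp only [finrank_euclideanSpace_fin]
  exact int1d_f3 hd hα hγ hγd

end Elevel

lemma mul_min_nonneg {c a b : ℝ} (hc : 0 ≤ c) : c * min a b = min (c*a) (c*b) := by
  rcases le_total a b with h|h
  · rw [min_eq_left h, min_eq_left (mul_le_mul_of_nonneg_left h hc)]
  · rw [min_eq_right h, min_eq_right (mul_le_mul_of_nonneg_left h hc)]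

lemma one_add_rpow_le {x γ : ℝ} (hx : 0 ≤ x) (hγ : 0 ≤ γ) :
    (1+x)^γ ≤ 2^γ * (1+x^γ) := by
  have h2 : (0:ℝ) ≤ 2^γ := rpow_nonneg (by norm_num) _
  have hxγ : (0:ℝ) ≤ x^γ := rpow_nonneg hx _
  rcases le_total x 1 with h | h
  · calc (1+x)^γ ≤ 2^γ := Real.rpow_le_rpow (by linarith) (by linarith) hγ
      _ ≤ 2^γ * (1+x^γ) := le_mul_of_one_le_right h2 (by linarith)
  · calc (1+x)^γ ≤ (2*x)^γ := Real.rpow_le_rpow (by linarith) (by linarith) hγ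
      _ = 2^γ * x^γ := Real.mul_rpow (by norm_num) hx
      _ ≤ 2^γ * (1+x^γ) := by nlinarith

section scaling

variable {d : ℕ} {α β γ : ℝ}

lemma scaling_ptwise (hα : 0 < α) {s t : ℝ} (hs : 0 < s) (ht : 0 < t)
    (u : EuclideanSpace ℝ (Fin d)) :
    min (s ^ (-(d:ℝ)/α)) (s / ‖u‖ ^ ((d:ℝ)+α)) * (1 + (t^(1/α) / ‖u‖)^γ)
      = s ^ (-(d:ℝ)/α) *
        ((fun v : EuclideanSpace ℝ (Fin d) =>
            min 1 (‖v‖^(-((d:ℝ)+α))) * (1 + (t/s)^(γ/α) * ‖v‖^(-γ)))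
          ((s^(-(1:ℝ)/α) : ℝ) • u)) := by
  have hc : (0:ℝ) < s^(-(1:ℝ)/α) := rpow_pos_of_pos hs _
  have hnorm : ‖(s^(-(1:ℝ)/α) : ℝ) • u‖ = s^(-(1:ℝ)/α) * ‖u‖ := by
    rw [norm_smul, Real.norm_eq_abs, abs_of_pos hc]
  simp only [hnorm]
  have hpow : ∀ p : ℝ, (s^(-(1:ℝ)/α) * ‖u‖) ^ (-p) = s^(p/α) * ‖u‖^(-p) := by
    intro p
    rw [Real.mul_rpow hc.le (norm_nonneg u), ← Real.rpow_mul hs.le,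
      show (-(1:ℝ)/α) * (-p) = p/α by ring]
  rw [hpow ((d:ℝ)+α), hpow γ]
  have hsd : (0:ℝ) < s ^ (-(d:ℝ)/α) := rpow_pos_of_pos hs _
  have hmin : s ^ (-(d:ℝ)/α) * min 1 (s^(((d:ℝ)+α)/α) * ‖u‖^(-((d:ℝ)+α)))
      = min (s ^ (-(d:ℝ)/α)) (s / ‖u‖ ^ ((d:ℝ)+α)) := by
    rw [mul_min_nonneg hsd.le, mul_one]
    congr 1
    rw [← mul_assoc, ← Real.rpow_add hs,
      show -(d:ℝ)/α + ((d:ℝ)+α)/α = 1 by field_simp; ring,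
      Real.rpow_one, Real.rpow_neg (norm_nonneg u), div_eq_mul_inv]
  have hsne : (s:ℝ)^(γ/α) ≠ 0 := ne_of_gt (rpow_pos_of_pos hs _)
  have hsec : 1 + (t/s)^(γ/α) * (s^(γ/α) * ‖u‖^(-γ)) = 1 + (t^(1/α) / ‖u‖)^γ := by
    congr 1
    rw [Real.div_rpow ht.le hs.le,
      Real.div_rpow (Real.rpow_nonneg ht.le _) (norm_nonneg u),
      ← Real.rpow_mul ht.le, show (1/α)*γ = γ/α by ring,
      Real.rpow_neg (norm_nonneg u)]
    field_simp
  rw [hsec, ← mul_assoc, hmin]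

lemma profile (hd : 1 ≤ d) (hα : 0 < α) (hγ : 0 ≤ γ) (hγd : γ < d)
    {s t : ℝ} (hs : 0 < s) (ht : 0 < t) :
    Integrable (fun u : EuclideanSpace ℝ (Fin d) =>
        min (s ^ (-(d:ℝ)/α)) (s / ‖u‖ ^ ((d:ℝ)+α)) * (1 + (t^(1/α) / ‖u‖)^γ)) volume ∧
    ∫ u : EuclideanSpace ℝ (Fin d),
        min (s ^ (-(d:ℝ)/α)) (s / ‖u‖ ^ ((d:ℝ)+α)) * (1 + (t^(1/α) / ‖u‖)^γ)
      = (∫ v : EuclideanSpace ℝ (Fin d), min 1 (‖v‖^(-((d:ℝ)+α))))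
        + (t/s)^(γ/α) *
          ∫ v : EuclideanSpace ℝ (Fin d), min 1 (‖v‖^(-((d:ℝ)+α))) * ‖v‖^(-γ) := by
  set g0 : EuclideanSpace ℝ (Fin d) → ℝ :=
    fun v => min 1 (‖v‖^(-((d:ℝ)+α))) * (1 + (t/s)^(γ/α) * ‖v‖^(-γ)) with hg0
  have hg0eq : g0 = fun v => min 1 (‖v‖^(-((d:ℝ)+α)))
      + (t/s)^(γ/α) * (min 1 (‖v‖^(-((d:ℝ)+α))) * ‖v‖^(-γ)) := by
    funext v; simp only [hg0]; ring
  have hg0int : Integrable g0 volume := by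
    rw [hg0eq]; exact (intE2 hd hα).add ((intE3 hd hα hγ hγd).const_mul _)
  have hcne : (s^(-(1:ℝ)/α) : ℝ) ≠ 0 := ne_of_gt (rpow_pos_of_pos hs _)
  have hfun : (fun u : EuclideanSpace ℝ (Fin d) =>
      min (s ^ (-(d:ℝ)/α)) (s / ‖u‖ ^ ((d:ℝ)+α)) * (1 + (t^(1/α) / ‖u‖)^γ))
      = fun u => s ^ (-(d:ℝ)/α) * g0 ((s^(-(1:ℝ)/α) : ℝ) • u) :=
    funext (scaling_ptwise hα hs ht)
  have hsd : (0:ℝ) < s ^ (-(d:ℝ)/α) := rpow_pos_of_pos hs _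
  constructor
  · rw [hfun]; exact (hg0int.comp_smul hcne).const_mul _
  · rw [hfun, integral_const_mul, Measure.integral_comp_smul volume g0 (s^(-(1:ℝ)/α)),
      finrank_euclideanSpace_fin,
      show ((s^(-(1:ℝ)/α) : ℝ) ^ d) = s ^ (-(d:ℝ)/α) by
        rw [← Real.rpow_natCast (s^(-(1:ℝ)/α)) d, ← Real.rpow_mul hs.le,
          show (-(1:ℝ)/α) * d = -(d:ℝ)/α by ring],
      abs_of_pos (inv_pos.2 hsd), smul_eq_mul, ← mul_assoc,
      mul_inv_cancel₀ (ne_of_gt hsd), one_mul, hg0eq,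
      integral_add (intE2 hd hα) ((intE3 hd hα hγ hγd).const_mul _), integral_const_mul]

end scaling

theorem stmt15 (d : ℕ) (hd : 1 ≤ d) (α β γ A : ℝ) (hα : 0 < α) (hα2 : α < 2)
    (hβ : α < β) (hγ : 0 ≤ γ) (hγα : γ < min α d) (hA : 0 < A) :
    ∃ C : ℝ, 0 < C ∧
      ∀ F : EuclideanSpace ℝ (Fin d) → EuclideanSpace ℝ (Fin d) → ℝ,
        Measurable (Function.uncurry F) →
        (∀ z w, |F z w| ≤ A * min (dist z w ^ β) 1) →
        (∀ z, F z z = 0) →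
        ∀ D : Set (EuclideanSpace ℝ (Fin d)), MeasurableSet D →
          ∀ t : ℝ, 0 < t → ∀ y ∈ D,
            (∫ s in Set.Ioo (0 : ℝ) t, ∫ w : EuclideanSpace ℝ (Fin d),
                ∫ z : EuclideanSpace ℝ (Fin d),
                  min (s ^ (-(d : ℝ) / α)) (s / (dist y w) ^ ((d : ℝ) + α)) *
                    (1 + min (dist z w) (t ^ (1 / α)) / dist y w) ^ γ *
                      ((|F z w| + |F w z|) / dist z w ^ ((d : ℝ) + α)))
              ≤ C * A * t := by
  have hγa : γ < α := lt_of_lt_of_le hγα (min_le_left _ _)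
  have hγd : γ < (d:ℝ) := lt_of_lt_of_le hγα (min_le_right _ _)
  haveI := nontrivialE (d := d) hd
  have h1int := intE1 hd hα hβ
  have h2int := intE2 (α := α) hd hα
  have h3int := intE3 hd hα hγ hγd
  set J1 := ∫ u : EuclideanSpace ℝ (Fin d), min (‖u‖^β) 1 / ‖u‖^((d:ℝ)+α) with hJ1def
  set J2 := ∫ v : EuclideanSpace ℝ (Fin d), min 1 (‖v‖^(-((d:ℝ)+α))) with hJ2def
  set J3 := ∫ v : EuclideanSpace ℝ (Fin d), min 1 (‖v‖^(-((d:ℝ)+α))) * ‖v‖^(-γ) with hJ3def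
  have hJ1 : 0 ≤ J1 := integral_nonneg fun u =>
    div_nonneg (le_min (rpow_nonneg (norm_nonneg u) _) zero_le_one) (rpow_nonneg (norm_nonneg u) _)
  have hJ2 : 0 ≤ J2 := integral_nonneg fun v =>
    le_min zero_le_one (rpow_nonneg (norm_nonneg v) _)
  have hJ3 : 0 ≤ J3 := integral_nonneg fun v =>
    mul_nonneg (le_min zero_le_one (rpow_nonneg (norm_nonneg v) _)) (rpow_nonneg (norm_nonneg v) _)
  have hδ : (0:ℝ) < -(γ/α) + 1 := by
    have : γ/α < 1 := (div_lt_one hα).mpr hγa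
    linarith
  have h2γ : (0:ℝ) < (2:ℝ)^γ := Real.rpow_pos_of_pos (by norm_num) _
  have hC0 : 0 ≤ 2^γ * 2 * J1 * (J2 + J3 * (-(γ/α)+1)⁻¹) := by
    apply mul_nonneg (mul_nonneg (mul_nonneg h2γ.le (by norm_num)) hJ1)
    exact add_nonneg hJ2 (mul_nonneg hJ3 (inv_nonneg.2 hδ.le))
  refine ⟨2^γ * 2 * J1 * (J2 + J3 * (-(γ/α)+1)⁻¹) + 1, by linarith, ?_⟩
  intro F hFmeas hF hFdiag D hD t ht y hy
  have inn : ∀ s : ℝ, 0 ≤ s → ∀ (w z : EuclideanSpace ℝ (Fin d)),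
      0 ≤ min (s ^ (-(d : ℝ) / α)) (s / (dist y w) ^ ((d : ℝ) + α)) *
        (1 + min (dist z w) (t ^ (1 / α)) / dist y w) ^ γ *
          ((|F z w| + |F w z|) / dist z w ^ ((d : ℝ) + α)) := by
    intro s hs w z
    have h1 : 0 ≤ min (s ^ (-(d : ℝ) / α)) (s / (dist y w) ^ ((d : ℝ) + α)) :=
      le_min (rpow_nonneg hs _) (div_nonneg hs (rpow_nonneg dist_nonneg _))
    have h2 : 0 ≤ (1 + min (dist z w) (t ^ (1 / α)) / dist y w) ^ γ :=
      rpow_nonneg (by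
        have : 0 ≤ min (dist z w) (t ^ (1 / α)) / dist y w :=
          div_nonneg (le_min dist_nonneg (rpow_nonneg ht.le _)) dist_nonneg
        linarith) _
    have h3 : 0 ≤ (|F z w| + |F w z|) / dist z w ^ ((d : ℝ) + α) :=
      div_nonneg (add_nonneg (abs_nonneg _) (abs_nonneg _)) (rpow_nonneg dist_nonneg _)
    exact mul_nonneg (mul_nonneg h1 h2) h3
  -- Step Z : bound the inner z-integral
  have stepZ : ∀ s : ℝ, 0 ≤ s → ∀ w : EuclideanSpace ℝ (Fin d),
      (∫ z : EuclideanSpace ℝ (Fin d),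
          min (s ^ (-(d : ℝ) / α)) (s / (dist y w) ^ ((d : ℝ) + α)) *
            (1 + min (dist z w) (t ^ (1 / α)) / dist y w) ^ γ *
              ((|F z w| + |F w z|) / dist z w ^ ((d : ℝ) + α)))
        ≤ (min (s ^ (-(d : ℝ) / α)) (s / (dist y w) ^ ((d : ℝ) + α)) *
            (1 + (t ^ (1/α) / dist y w)^γ)) * (2^γ * (2*A) * J1) := by
    intro s hs w
    have hq : 0 ≤ min (s ^ (-(d : ℝ) / α)) (s / (dist y w) ^ ((d : ℝ) + α)) :=
      le_min (rpow_nonneg hs _) (div_nonneg hs (rpow_nonneg dist_nonneg _))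
    have hTR : 0 ≤ t ^ (1/α) / dist y w := div_nonneg (rpow_nonneg ht.le _) dist_nonneg
    have hptw : ∀ z : EuclideanSpace ℝ (Fin d),
        min (s ^ (-(d : ℝ) / α)) (s / (dist y w) ^ ((d : ℝ) + α)) *
          (1 + min (dist z w) (t ^ (1 / α)) / dist y w) ^ γ *
            ((|F z w| + |F w z|) / dist z w ^ ((d : ℝ) + α))
        ≤ (min (s ^ (-(d : ℝ) / α)) (s / (dist y w) ^ ((d : ℝ) + α)) *
              (1 + (t ^ (1/α) / dist y w)^γ) * (2^γ * (2*A))) *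
            (min (‖z - w‖^β) 1 / ‖z - w‖^((d:ℝ)+α)) := by
      intro z
      have hP : (1 + min (dist z w) (t ^ (1 / α)) / dist y w) ^ γ
          ≤ 2^γ * (1 + (t ^ (1/α) / dist y w)^γ) := by
        refine le_trans (Real.rpow_le_rpow (by
            have : 0 ≤ min (dist z w) (t ^ (1 / α)) / dist y w :=
              div_nonneg (le_min dist_nonneg (rpow_nonneg ht.le _)) dist_nonneg
            linarith) ?_ hγ) (one_add_rpow_le hTR hγ)
        have hmm : min (dist z w) (t ^ (1 / α)) / dist y w ≤ t ^ (1/α) / dist y w := by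
          rcases eq_or_lt_of_le (dist_nonneg (x := y) (y := w)) with h0 | h0
          · rw [← h0]; simp
          · gcongr
            exact min_le_right _ _
        linarith
      have hG : (|F z w| + |F w z|) / dist z w ^ ((d : ℝ) + α)
          ≤ 2*A * (min (‖z - w‖^β) 1 / ‖z - w‖^((d:ℝ)+α)) := by
        rw [dist_eq_norm]
        rcases eq_or_lt_of_le (norm_nonneg (z - w)) with h0 | h0
        · rw [← h0, Real.zero_rpow (by positivity)]
          simp
        · have e1 := hF z w
          have e2 := hF w z
          rw [dist_eq_norm] at e1
          rw [dist_comm w z, dist_eq_norm] at e2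
          have hnum : |F z w| + |F w z| ≤ 2*A * min (‖z - w‖^β) 1 := by linarith
          calc (|F z w| + |F w z|) / ‖z - w‖ ^ ((d:ℝ)+α)
              ≤ (2*A * min (‖z - w‖^β) 1) / ‖z - w‖ ^ ((d:ℝ)+α) := by
                have hden : (0:ℝ) < ‖z - w‖ ^ ((d:ℝ)+α) := rpow_pos_of_pos h0 _
                gcongr
            _ = 2*A * (min (‖z - w‖^β) 1 / ‖z - w‖^((d:ℝ)+α)) := by ring
      have hG0 : 0 ≤ (|F z w| + |F w z|) / dist z w ^ ((d : ℝ) + α) :=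
        div_nonneg (add_nonneg (abs_nonneg _) (abs_nonneg _)) (rpow_nonneg dist_nonneg _)
      calc min (s ^ (-(d : ℝ) / α)) (s / (dist y w) ^ ((d : ℝ) + α)) *
            (1 + min (dist z w) (t ^ (1 / α)) / dist y w) ^ γ *
              ((|F z w| + |F w z|) / dist z w ^ ((d : ℝ) + α))
          ≤ min (s ^ (-(d : ℝ) / α)) (s / (dist y w) ^ ((d : ℝ) + α)) *
              (2^γ * (1 + (t ^ (1/α) / dist y w)^γ)) *
                (2*A * (min (‖z - w‖^β) 1 / ‖z - w‖^((d:ℝ)+α))) := by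
            apply mul_le_mul (mul_le_mul_of_nonneg_left hP hq) hG hG0
            apply mul_nonneg hq
            have : (0:ℝ) ≤ (t ^ (1/α) / dist y w)^γ := rpow_nonneg hTR _
            positivity
        _ = (min (s ^ (-(d : ℝ) / α)) (s / (dist y w) ^ ((d : ℝ) + α)) *
              (1 + (t ^ (1/α) / dist y w)^γ) * (2^γ * (2*A))) *
            (min (‖z - w‖^β) 1 / ‖z - w‖^((d:ℝ)+α)) := by ring
    calc (∫ z : EuclideanSpace ℝ (Fin d),
            min (s ^ (-(d : ℝ) / α)) (s / (dist y w) ^ ((d : ℝ) + α)) *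
              (1 + min (dist z w) (t ^ (1 / α)) / dist y w) ^ γ *
                ((|F z w| + |F w z|) / dist z w ^ ((d : ℝ) + α)))
        ≤ ∫ z : EuclideanSpace ℝ (Fin d),
            (min (s ^ (-(d : ℝ) / α)) (s / (dist y w) ^ ((d : ℝ) + α)) *
              (1 + (t ^ (1/α) / dist y w)^γ) * (2^γ * (2*A))) *
              (min (‖z - w‖^β) 1 / ‖z - w‖^((d:ℝ)+α)) := by
          exact integral_mono_of_nonneg (ae_of_all _ (inn s hs w))
            ((h1int.comp_sub_right w).const_mul _) (ae_of_all _ hptw)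
      _ = (min (s ^ (-(d : ℝ) / α)) (s / (dist y w) ^ ((d : ℝ) + α)) *
            (1 + (t ^ (1/α) / dist y w)^γ)) * (2^γ * (2*A) * J1) := by
          rw [integral_const_mul,
            show (∫ z : EuclideanSpace ℝ (Fin d), min (‖z - w‖^β) 1 / ‖z - w‖^((d:ℝ)+α)) = J1
              from integral_sub_right_eq_self
                (fun u : EuclideanSpace ℝ (Fin d) => min (‖u‖^β) 1 / ‖u‖^((d:ℝ)+α)) w]
          ring
  -- Step W : bound the w-integral for each s in (0,t)
  have stepW : ∀ s ∈ Set.Ioo (0:ℝ) t,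
      (∫ w : EuclideanSpace ℝ (Fin d), ∫ z : EuclideanSpace ℝ (Fin d),
          min (s ^ (-(d : ℝ) / α)) (s / (dist y w) ^ ((d : ℝ) + α)) *
            (1 + min (dist z w) (t ^ (1 / α)) / dist y w) ^ γ *
              ((|F z w| + |F w z|) / dist z w ^ ((d : ℝ) + α)))
        ≤ (2^γ * (2*A) * J1 * J2) + (2^γ * (2*A) * J1 * J3 * t^(γ/α)) * s^(-(γ/α)) := by
    intro s hs
    obtain ⟨hs0, hst⟩ := hs
    obtain ⟨hPint, hPval⟩ := profile hd hα hγ hγd hs0 ht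
    have hts : (t/s)^(γ/α) = t^(γ/α) * s^(-(γ/α)) := by
      rw [Real.div_rpow ht.le hs0.le, Real.rpow_neg hs0.le, div_eq_mul_inv]
    calc (∫ w : EuclideanSpace ℝ (Fin d), ∫ z : EuclideanSpace ℝ (Fin d),
            min (s ^ (-(d : ℝ) / α)) (s / (dist y w) ^ ((d : ℝ) + α)) *
              (1 + min (dist z w) (t ^ (1 / α)) / dist y w) ^ γ *
                ((|F z w| + |F w z|) / dist z w ^ ((d : ℝ) + α)))
        ≤ ∫ w : EuclideanSpace ℝ (Fin d),
            ((fun u : EuclideanSpace ℝ (Fin d) =>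
                min (s ^ (-(d:ℝ)/α)) (s / ‖u‖ ^ ((d:ℝ)+α)) * (1 + (t^(1/α) / ‖u‖)^γ)) (y - w)) *
              (2^γ * (2*A) * J1) := by
          refine integral_mono_of_nonneg
            (ae_of_all _ fun w => integral_nonneg (inn s hs0.le w))
            ((hPint.comp_sub_left y).mul_const _) (ae_of_all _ fun w => ?_)
          refine le_trans (stepZ s hs0.le w) (le_of_eq ?_)
          rw [dist_eq_norm]
      _ = (∫ u : EuclideanSpace ℝ (Fin d),
            min (s ^ (-(d:ℝ)/α)) (s / ‖u‖ ^ ((d:ℝ)+α)) * (1 + (t^(1/α) / ‖u‖)^γ)) *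
              (2^γ * (2*A) * J1) := by
          rw [integral_mul_const, integral_sub_left_eq_self
            (fun u : EuclideanSpace ℝ (Fin d) =>
              min (s ^ (-(d:ℝ)/α)) (s / ‖u‖ ^ ((d:ℝ)+α)) * (1 + (t^(1/α) / ‖u‖)^γ)) volume y]
      _ = (2^γ * (2*A) * J1 * J2) + (2^γ * (2*A) * J1 * J3 * t^(γ/α)) * s^(-(γ/α)) := by
          rw [hPval, hts]; ring
  -- Step S : integrate in s
  have hrpow_int : IntegrableOn (fun s : ℝ => s^(-(γ/α))) (Set.Ioo (0:ℝ) t) :=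
    ((intervalIntegral.intervalIntegrable_rpow' (by linarith : (-1:ℝ) < -(γ/α))).1).mono_set
      Set.Ioo_subset_Ioc_self
  have hIoo : IntegrableOn (fun s : ℝ =>
      (2^γ * (2*A) * J1 * J2) + (2^γ * (2*A) * J1 * J3 * t^(γ/α)) * s^(-(γ/α)))
      (Set.Ioo (0:ℝ) t) :=
    ((integrableOn_const_iff).mpr (Or.inr measure_Ioo_lt_top)).add (hrpow_int.const_mul _)
  have hsval : ∫ s in Set.Ioo (0:ℝ) t, s^(-(γ/α)) = t^(-(γ/α)+1) / (-(γ/α)+1) := by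
    rw [← integral_Ioc_eq_integral_Ioo, ← intervalIntegral.integral_of_le ht.le,
      integral_rpow (Or.inl (by linarith)), Real.zero_rpow (ne_of_gt hδ), sub_zero]
  have hrt : t^(γ/α) * t^(-(γ/α)+1) = t := by
    rw [← Real.rpow_add ht, show γ/α + (-(γ/α)+1) = 1 by ring, Real.rpow_one]
  calc (∫ s in Set.Ioo (0 : ℝ) t, ∫ w : EuclideanSpace ℝ (Fin d),
          ∫ z : EuclideanSpace ℝ (Fin d),
            min (s ^ (-(d : ℝ) / α)) (s / (dist y w) ^ ((d : ℝ) + α)) *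
              (1 + min (dist z w) (t ^ (1 / α)) / dist y w) ^ γ *
                ((|F z w| + |F w z|) / dist z w ^ ((d : ℝ) + α)))
      ≤ ∫ s in Set.Ioo (0:ℝ) t,
          ((2^γ * (2*A) * J1 * J2) + (2^γ * (2*A) * J1 * J3 * t^(γ/α)) * s^(-(γ/α))) := by
        refine integral_mono_of_nonneg ?_ hIoo ?_
        · filter_upwards [ae_restrict_mem measurableSet_Ioo] with s hs
          exact integral_nonneg fun w => integral_nonneg (inn s hs.1.le w)
        · filter_upwards [ae_restrict_mem measurableSet_Ioo] with s hs
          exact stepW s hs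
    _ = (2^γ * (2*A) * J1 * J2) * t
        + (2^γ * (2*A) * J1 * J3 * t^(γ/α)) * (t^(-(γ/α)+1) / (-(γ/α)+1)) := by
        rw [integral_add (by exact (integrableOn_const_iff).mpr (Or.inr measure_Ioo_lt_top))
            (hrpow_int.const_mul _), setIntegral_const, integral_const_mul, hsval,
          Real.volume_real_Ioo, sub_zero, max_eq_left ht.le, smul_eq_mul, mul_comm]
    _ = (2^γ * 2 * J1 * (J2 + J3 * (-(γ/α)+1)⁻¹)) * A * t := by
        have h5 : t ^ (γ/α) * (t ^ (-(γ/α)+1) / (-(γ/α)+1)) = t / (-(γ/α)+1) := by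
          rw [← mul_div_assoc, hrt]
        calc 2^γ * (2*A) * J1 * J2 * t
              + (2^γ * (2*A) * J1 * J3 * t^(γ/α)) * (t^(-(γ/α)+1) / (-(γ/α)+1))
            = 2^γ * (2*A) * J1 * J2 * t
              + 2^γ * (2*A) * J1 * J3 * (t^(γ/α) * (t^(-(γ/α)+1) / (-(γ/α)+1))) := by ring
          _ = (2^γ * 2 * J1 * (J2 + J3 * (-(γ/α)+1)⁻¹)) * A * t := by rw [h5]; ring
    _ ≤ (2^γ * 2 * J1 * (J2 + J3 * (-(γ/α)+1)⁻¹) + 1) * A * t := by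
        have hAt : 0 < A * t := mul_pos hA ht
        nlinarith
end
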